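/- Under a third Reidemeister move on chord diagrams (which changes the mutual position of three pairwise chords among a1,a2,a3 but preserves linkedness of each ai with every other chord), each of the three involved chords ai is even before the move if and only if the corresponding chord a'_i is even after the move, and every other chord's parity is also unchanged. -/

import Mathlib

/-- Two chords `c = {c.1, c.2}` and `d = {d.1, d.2}` (each written with smaller
endpoint first) of a chord diagram are *linked* (interleaved) iff the endpoints
of one separate the endpoints of the other on the circle. -/
def Linked (c d : ℕ × ℕ) : Prop :=
  (c.1 < d.1 ∧ d.1 < c.2 ∧ c.2 < d.2) ∨ (d.1 < c.1 ∧ c.1 < d.2 ∧ d.2 < c.2)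

instance : DecidableRel Linked := fun c d => by unfold Linked; infer_instance

/-- A chord diagram on the `N` points `0, …, N-1` of a circle: a finite set of
chords, each recorded as an ordered pair (smaller endpoint, larger endpoint),
forming a perfect matching of `{0, …, N-1}`. -/
structure IsChordDiagram (N : ℕ) (D : Finset (ℕ × ℕ)) : Prop where
  lt : ∀ c ∈ D, c.1 < c.2 ∧ c.2 < N
  matching : ∀ x < N, ∃! c, c ∈ D ∧ (c.1 = x ∨ c.2 = x)

lemma linked_comm (c d : ℕ × ℕ) : Linked c d ↔ Linked d c := by
  unfold Linked; tauto

lemma linked_irrefl (c : ℕ × ℕ) : ¬ Linked c c := by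
  unfold Linked; omega

lemma card_filter_image (p : ℕ × ℕ → Prop) [DecidablePred p] (f : Fin 3 → ℕ × ℕ)
    (hf : Function.Injective f) :
    ((Finset.univ.image f).filter p).card = (Finset.univ.filter (fun j => p (f j))).card := by
  rw [Finset.filter_image, Finset.card_image_of_injective _ hf]

lemma card_filter_union_disjoint (s t : Finset (ℕ × ℕ)) (h : Disjoint s t)
    (p : ℕ × ℕ → Prop) [DecidablePred p] :
    ((s ∪ t).filter p).card = (s.filter p).card + (t.filter p).card := by
  rw [Finset.filter_union, Finset.card_union_of_disjoint]
  exact Finset.disjoint_filter_filter h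

/-- A third Reidemeister move replaces three chords `a 0, a 1, a 2` of a chord
diagram by chords `a' 0, a' 1, a' 2`, preserving the linking of each of the
three chords with every other chord and toggling the pairwise linkings among
the triple.  Then each `a i` is even before the move iff `a' i` is even after
the move, and the parity of every other chord is also unchanged. -/
theorem stmt_4 (D0 : Finset (ℕ × ℕ)) (a a' : Fin 3 → ℕ × ℕ)
    (hinj : Function.Injective a) (hinj' : Function.Injective a')
    (hnot : ∀ i, a i ∉ D0) (hnot' : ∀ i, a' i ∉ D0)
    (hext : ∀ c ∈ D0, ∀ i, (Linked c (a i) ↔ Linked c (a' i)))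
    (htog : ∀ i j, i ≠ j → (Linked (a i) (a j) ↔ ¬ Linked (a' i) (a' j))) :
    (∀ i, (Even (((D0 ∪ Finset.univ.image a).filter fun d => Linked (a i) d).card) ↔
           Even (((D0 ∪ Finset.univ.image a').filter fun d => Linked (a' i) d).card))) ∧
    (∀ c ∈ D0,
      (Even (((D0 ∪ Finset.univ.image a).filter fun d => Linked c d).card) ↔
       Even (((D0 ∪ Finset.univ.image a').filter fun d => Linked c d).card))) := by
  classical
  have hdisj : Disjoint D0 (Finset.univ.image a) := by
    rw [Finset.disjoint_right]
    intro x hx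
    simp only [Finset.mem_image, Finset.mem_univ, true_and] at hx
    obtain ⟨i, rfl⟩ := hx
    exact hnot i
  have hdisj' : Disjoint D0 (Finset.univ.image a') := by
    rw [Finset.disjoint_right]
    intro x hx
    simp only [Finset.mem_image, Finset.mem_univ, true_and] at hx
    obtain ⟨i, rfl⟩ := hx
    exact hnot' i
  constructor
  · intro i
    rw [card_filter_union_disjoint _ _ hdisj, card_filter_union_disjoint _ _ hdisj',
      card_filter_image _ _ hinj, card_filter_image _ _ hinj']
    -- D0 parts are equal
    have hD0 : (D0.filter fun d => Linked (a i) d).card =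
        (D0.filter fun d => Linked (a' i) d).card := by
      apply Finset.card_nbij id
      · intro d hd
        simp only [Finset.mem_coe, Finset.mem_filter, id] at hd ⊢
        exact ⟨hd.1, (linked_comm _ _).mp (((hext d hd.1 i).mp ((linked_comm _ _).mp hd.2)))⟩
      · intro x _ y _ h; exact h
      · intro d hd
        simp only [Finset.mem_filter, Set.mem_image, Finset.mem_coe] at hd ⊢
        exact ⟨d, ⟨hd.1, (linked_comm _ _).mp (((hext d hd.1 i).mpr ((linked_comm _ _).mp hd.2)))⟩, rfl⟩
    rw [hD0]
    -- triple parts: complementary within univ.erase i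
    set S : Finset (Fin 3) := Finset.univ.filter (fun j => Linked (a i) (a j)) with hS
    set S' : Finset (Fin 3) := Finset.univ.filter (fun j => Linked (a' i) (a' j)) with hS'
    have hSsub : S ⊆ Finset.univ.erase i := by
      intro j hj
      simp only [hS, Finset.mem_filter] at hj
      refine Finset.mem_erase.mpr ⟨?_, Finset.mem_univ _⟩
      rintro rfl; exact linked_irrefl _ hj.2
    have hcompl : S' = (Finset.univ.erase i) \ S := by
      ext j
      simp only [hS, hS', Finset.mem_filter, Finset.mem_sdiff, Finset.mem_erase,
        Finset.mem_univ, true_and, and_true]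
      constructor
      · intro hj
        have hji : j ≠ i := by rintro rfl; exact linked_irrefl _ hj
        refine ⟨hji, fun h => ?_⟩
        exact (htog i j (Ne.symm hji)).mp h hj
      · rintro ⟨hji, h⟩
        by_contra h'
        exact h ((htog i j (Ne.symm hji)).mpr h')
    have hcard : S'.card = 2 - S.card := by
      rw [hcompl, Finset.card_sdiff_of_subset hSsub, Finset.card_erase_of_mem (Finset.mem_univ _)]
      simp
    have hle : S.card ≤ 2 := by
      have := Finset.card_le_card hSsub
      rw [Finset.card_erase_of_mem (Finset.mem_univ _)] at this
      simpa using this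
    rw [hcard]
    rw [Nat.even_add, Nat.even_add, Nat.even_sub hle]
    simp [Nat.even_iff]
  · intro c hc
    rw [card_filter_union_disjoint _ _ hdisj, card_filter_union_disjoint _ _ hdisj',
      card_filter_image _ _ hinj, card_filter_image _ _ hinj']
    have : (Finset.univ.filter fun j => Linked c (a j)) =
        (Finset.univ.filter fun j => Linked c (a' j)) := by
      ext j
      simp only [Finset.mem_filter, Finset.mem_univ, true_and]
      exact hext c hc j
    rw [this]
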